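/- Let n, q ≥ 2, 1 ≤ a ≤ n, and ν = ceil((n+1)/a). For l in [1:ν]^{q-1}, define the cell C_l as the set of compositions t of n into q parts with (l_i - 1)a ≤ t_i ≤ l_i·a - 1 for each i in [1:q-1]. Then C_l is nonempty if and only if q - 1 ≤ sum_{i=1}^{q-1} l_i ≤ n/a + (q-1). -/
import Mathlib


/-- A cubic cell `C_l` (indexed by `l ∈ [1:⌈(n+1)/a⌉]^{q-1}`) of the set of compositions
of `n` into `q` parts is nonempty if and only if `q-1 ≤ ∑ l_i ≤ n/a + (q-1)`. -/
theorem cell_nonempty_iff (n q a : ℕ) (hq : 2 ≤ q) (ha : 1 ≤ a) (han : a ≤ n)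
    (l : Fin (q - 1) → ℕ) (hl : ∀ i, 1 ≤ l i ∧ l i ≤ (n + a) / a) :
    (∃ t : Fin q → ℕ, (∑ i, t i) = n ∧
        ∀ i : Fin (q - 1),
          (l i - 1) * a ≤ t (Fin.castLE (Nat.sub_le q 1) i) ∧
          t (Fin.castLE (Nat.sub_le q 1) i) ≤ l i * a - 1) ↔
      ((q : ℝ) - 1 ≤ ∑ i, (l i : ℝ) ∧
        (∑ i, (l i : ℝ)) ≤ (n : ℝ) / (a : ℝ) + ((q : ℝ) - 1)) := by
  obtain ⟨k, rfl⟩ : ∃ k, q = k + 1 := ⟨q - 1, (Nat.succ_pred_eq_of_pos (by omega)).symm⟩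
  have hcast : ∀ i : Fin ((k+1)-1), Fin.castLE (Nat.sub_le (k+1) 1) i
      = Fin.castSucc (i : Fin k) := fun i => rfl
  have ha' : (0:ℝ) < a := by exact_mod_cast ha
  set m : ℕ := ∑ i : Fin ((k+1)-1), (l i - 1) * a with hm
  have h1 : (m : ℝ) = (∑ i : Fin ((k+1)-1), ((l i : ℝ) - 1)) * a := by
    rw [hm, Finset.sum_mul]
    push_cast
    refine Finset.sum_congr rfl fun i _ => ?_
    rw [Nat.cast_sub (hl i).1]
    push_cast; ring
  have hsum : (∑ i : Fin ((k+1)-1), ((l i : ℝ) - 1))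
      = (∑ i, (l i : ℝ)) - (((k+1:ℕ) : ℝ) - 1) := by
    rw [Finset.sum_sub_distrib]
    simp [Nat.add_sub_cancel]
  have key : m ≤ n ↔ (∑ i, (l i : ℝ)) ≤ (n : ℝ) / a + (((k+1:ℕ):ℝ) - 1) := by
    rw [← Nat.cast_le (α := ℝ), h1, hsum, ← sub_le_iff_le_add,
      ← le_div_iff₀ ha']
  have hlb : ((k+1:ℕ):ℝ) - 1 ≤ ∑ i, (l i : ℝ) := by
    have : (((k+1)-1 : ℕ) : ℝ) = ∑ i : Fin ((k+1)-1), (1:ℝ) := by simp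
    push_cast
    calc ((k:ℝ)+1) - 1 = ∑ i : Fin ((k+1)-1), (1:ℝ) := by
          simp [Nat.add_sub_cancel]
      _ ≤ ∑ i, (l i : ℝ) :=
          Finset.sum_le_sum fun i _ => by exact_mod_cast (hl i).1
  constructor
  · rintro ⟨t, hts, htb⟩
    refine ⟨by push_cast at hlb ⊢; exact hlb, ?_⟩
    have hmn : m ≤ n := by
      calc m ≤ ∑ i : Fin ((k+1)-1), t (Fin.castLE (Nat.sub_le (k+1) 1) i) :=
            Finset.sum_le_sum fun i _ => (htb i).1
        _ ≤ ∑ i : Fin (k+1), t i := by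
            rw [Fin.sum_univ_castSucc (f := t)]
            exact Nat.le_add_right _ _
        _ = n := hts
    have := key.mp hmn
    push_cast at this ⊢
    exact this
  · rintro ⟨-, hub⟩
    have hmn : m ≤ n := key.mpr (by push_cast at hub ⊢; exact hub)
    refine ⟨Fin.snoc (fun i : Fin k => (l (i : Fin ((k+1)-1)) - 1) * a) (n - m), ?_, ?_⟩
    · rw [Fin.sum_univ_castSucc]
      simp only [Fin.snoc_castSucc, Fin.snoc_last]
      have hid : (∑ i : Fin k, (l i - 1) * a) = m := rfl
      omega
    · intro i
      rw [hcast i, Fin.snoc_castSucc]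
      constructor
      · exact le_refl _
      · have h1 := (hl i).1
        have : (l i - 1) * a = l i * a - a := by
          rw [Nat.sub_mul, one_mul]
        omega
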